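/- arXiv:2001.06743 — 3 statements merged into one kernel-verified Lean document; each statement's English description precedes it below -/
import Mathlib

section
/- Let x = (s_x, i_x) ∈ ℝ² and p₀, p₁ > 0 with p₀ + p₁ < 1. Define I_ini(x) = sup over y = (s_y, i_y) ∈ ℝ² of [s_y·s_x + i_y·i_x − log(1 − p₀ − p₁ + e^{s_y}p₀ + e^{i_y}p₁)]. If s_x > 0, i_x > 0 and s_x + i_x < 1, then I_ini(x) = s_x·log(s_x/p₀) + i_x·log(i_x/p₁) + (1 − s_x − i_x)·log((1 − s_x − i_x)/(1 − p₀ − p₁)). -/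
lemma gibbs_term (q r : ℝ) (hq : 0 < q) (hr : 0 < r) :
    q * Real.log (r / q) ≤ r - q := by
  have h := Real.log_le_sub_one_of_pos (div_pos hr hq)
  have h2 : q * (r / q - 1) = r - q := by field_simp
  nlinarith [mul_le_mul_of_nonneg_left h hq.le]

theorem stmt0 (p₀ p₁ sx ix : ℝ)
    (hp₀ : 0 < p₀) (hp₁ : 0 < p₁) (hp : p₀ + p₁ < 1)
    (hsx : 0 < sx) (hix : 0 < ix) (hx : sx + ix < 1) :
    sSup {v : ℝ | ∃ sy iy : ℝ,
        v = sy * sx + iy * ix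
          - Real.log (1 - p₀ - p₁ + Real.exp sy * p₀ + Real.exp iy * p₁)}
      = sx * Real.log (sx / p₀) + ix * Real.log (ix / p₁)
        + (1 - sx - ix) * Real.log ((1 - sx - ix) / (1 - p₀ - p₁)) := by
  have hc : 0 < 1 - p₀ - p₁ := by linarith
  have ht : 0 < 1 - sx - ix := by linarith
  set c := 1 - p₀ - p₁ with hcdef
  set t := 1 - sx - ix with htdef
  apply IsGreatest.csSup_eq
  constructor
  · -- membership: the supremum is attained
    refine ⟨Real.log (sx * c / (t * p₀)), Real.log (ix * c / (t * p₁)), ?_⟩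
    have hes : Real.exp (Real.log (sx * c / (t * p₀))) = sx * c / (t * p₀) :=
      Real.exp_log (by positivity)
    have hei : Real.exp (Real.log (ix * c / (t * p₁))) = ix * c / (t * p₁) :=
      Real.exp_log (by positivity)
    rw [hes, hei]
    have hZ : c + sx * c / (t * p₀) * p₀ + ix * c / (t * p₁) * p₁ = c / t := by
      field_simp
      ring
    rw [hZ]
    have l1 : Real.log (sx * c / (t * p₀))
        = Real.log sx + Real.log c - Real.log t - Real.log p₀ := by
      rw [Real.log_div (by positivity) (by positivity), Real.log_mul hsx.ne' hc.ne',
        Real.log_mul ht.ne' hp₀.ne']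
      ring
    have l2 : Real.log (ix * c / (t * p₁))
        = Real.log ix + Real.log c - Real.log t - Real.log p₁ := by
      rw [Real.log_div (by positivity) (by positivity), Real.log_mul hix.ne' hc.ne',
        Real.log_mul ht.ne' hp₁.ne']
      ring
    have l3 : Real.log (c / t) = Real.log c - Real.log t :=
      Real.log_div hc.ne' ht.ne'
    have r1 : Real.log (sx / p₀) = Real.log sx - Real.log p₀ :=
      Real.log_div hsx.ne' hp₀.ne'
    have r2 : Real.log (ix / p₁) = Real.log ix - Real.log p₁ :=
      Real.log_div hix.ne' hp₁.ne'
    have r3 : Real.log (t / c) = Real.log t - Real.log c :=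
      Real.log_div ht.ne' hc.ne'
    rw [l1, l2, l3, r1, r2, r3]
    ring
  · -- upper bound (Gibbs' inequality)
    rintro v ⟨sy, iy, rfl⟩
    set Z := c + Real.exp sy * p₀ + Real.exp iy * p₁ with hZdef
    have hZ : 0 < Z := by positivity
    have e1 := gibbs_term sx (Real.exp sy * p₀ / Z) hsx (by positivity)
    have e2 := gibbs_term ix (Real.exp iy * p₁ / Z) hix (by positivity)
    have e3 := gibbs_term t (c / Z) ht (by positivity)
    have l1 : Real.log (Real.exp sy * p₀ / Z / sx)
        = sy + Real.log p₀ - Real.log Z - Real.log sx := by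
      rw [Real.log_div (by positivity) hsx.ne', Real.log_div (by positivity) hZ.ne',
        Real.log_mul (Real.exp_ne_zero _) hp₀.ne', Real.log_exp]
    have l2 : Real.log (Real.exp iy * p₁ / Z / ix)
        = iy + Real.log p₁ - Real.log Z - Real.log ix := by
      rw [Real.log_div (by positivity) hix.ne', Real.log_div (by positivity) hZ.ne',
        Real.log_mul (Real.exp_ne_zero _) hp₁.ne', Real.log_exp]
    have l3 : Real.log (c / Z / t) = Real.log c - Real.log Z - Real.log t := by
      rw [Real.log_div (by positivity) ht.ne', Real.log_div hc.ne' hZ.ne']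
    rw [l1] at e1; rw [l2] at e2; rw [l3] at e3
    have r1 : Real.log (sx / p₀) = Real.log sx - Real.log p₀ :=
      Real.log_div hsx.ne' hp₀.ne'
    have r2 : Real.log (ix / p₁) = Real.log ix - Real.log p₁ :=
      Real.log_div hix.ne' hp₁.ne'
    have r3 : Real.log (t / c) = Real.log t - Real.log c :=
      Real.log_div ht.ne' hc.ne'
    have hsum : Real.exp sy * p₀ / Z + Real.exp iy * p₁ / Z + c / Z = 1 := by
      field_simp
      ring
    rw [r1, r2, r3]
    have hts : sx + ix + t = 1 := by rw [htdef]; ring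
    have hL : sx * Real.log Z + ix * Real.log Z + t * Real.log Z = Real.log Z := by
      linear_combination Real.log Z * hts
    clear_value c t Z
    linarith [e1, e2, e3, hsum, hL]
end

section
/- Let p₀, p₁ > 0 with p₀ + p₁ < 1. For x, y ≥ 0 with x + y ≤ 1, the probability under the multinomial distribution that exactly ⌊nx⌋ of n i.i.d. trinomial trials (with outcome probabilities p₀, p₁, 1−p₀−p₁) land in the first class and ⌊ny⌋ in the second class satisfies: (1/n)·log of this probability converges as n → ∞ to −[x·log(x/p₀) + y·log(y/p₁) + (1−x−y)·log((1−x−y)/(1−p₀−p₁))], with the convention 0·log 0 = 0. -/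
open Filter Real

noncomputable def Dd (m : ℕ) : ℝ := Real.log m.factorial - m * (Real.log m - 1)

lemma log_factorial_eq (m : ℕ) :
    Real.log m.factorial = m * Real.log m - m + Dd m := by
  unfold Dd; ring

lemma Dd_eq (m : ℕ) :
    Dd m = Real.log (Stirling.stirlingSeq m) + 1 / 2 * Real.log (2 * m) := by
  have h := Stirling.log_stirlingSeq_formula m
  rcases Nat.eq_zero_or_pos m with hm | hm
  · subst hm; simp [Dd, Stirling.stirlingSeq_zero]
  · have hm' : (0:ℝ) < m := by exact_mod_cast hm
    have h2 : Real.log ((m : ℝ) / Real.exp 1) = Real.log m - 1 := by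
      rw [Real.log_div hm'.ne' (Real.exp_ne_zero 1), Real.log_exp]
    rw [h2] at h
    unfold Dd; linarith

lemma Dd_bound : ∃ C : ℝ, 0 ≤ C ∧ ∀ m : ℕ, |Dd m| ≤ C + Real.log (2 * (m + 1)) := by
  have hpos : (0:ℝ) < Real.sqrt Real.pi := Real.sqrt_pos.mpr Real.pi_pos
  have hlog : Tendsto (fun m : ℕ => Real.log (Stirling.stirlingSeq m)) atTop
      (nhds (Real.log (Real.sqrt Real.pi))) :=
    ((Real.continuousAt_log hpos.ne').tendsto).comp Stirling.tendsto_stirlingSeq_sqrt_pi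
  obtain ⟨A, hA⟩ := hlog.bddAbove_range
  obtain ⟨B, hB⟩ := hlog.bddBelow_range
  refine ⟨max A 0 + max (-B) 0, by positivity, fun m => ?_⟩
  have hA' : Real.log (Stirling.stirlingSeq m) ≤ max A 0 :=
    le_trans (hA ⟨m, rfl⟩) (le_max_left _ _)
  have hB' : -(max (-B) 0) ≤ Real.log (Stirling.stirlingSeq m) := by
    have := hB ⟨m, rfl⟩
    have : B ≤ Real.log (Stirling.stirlingSeq m) := this
    nlinarith [le_max_left (-B) 0]
  have habs : |Real.log (Stirling.stirlingSeq m)| ≤ max A 0 + max (-B) 0 := by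
    rw [abs_le]; constructor <;> nlinarith [le_max_left (-B) 0, le_max_left A 0,
      le_max_right A 0, le_max_right (-B) 0]
  have hlog2 : |1 / 2 * Real.log (2 * (m:ℝ))| ≤ Real.log (2 * ((m:ℝ) + 1)) := by
    rcases Nat.eq_zero_or_pos m with hm | hm
    · subst hm; simp [Real.log_nonneg, abs_of_nonneg]
    · have h1 : (1:ℝ) ≤ 2 * (m:ℝ) := by
        have : (1:ℝ) ≤ (m:ℝ) := by exact_mod_cast hm
        linarith
      have h2 : (0:ℝ) ≤ Real.log (2 * (m:ℝ)) := Real.log_nonneg h1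
      have h3 : Real.log (2 * (m:ℝ)) ≤ Real.log (2 * ((m:ℝ) + 1)) := by
        apply Real.log_le_log (by linarith)
        linarith
      rw [abs_of_nonneg (by linarith)]
      linarith
  calc |Dd m| ≤ |Real.log (Stirling.stirlingSeq m)| + |1 / 2 * Real.log (2 * m)| := by
        rw [Dd_eq]; exact abs_add_le _ _
    _ ≤ max A 0 + max (-B) 0 + Real.log (2 * (m + 1)) := by
        push_cast
        push_cast at hlog2
        linarith

lemma tendsto_log_aux : Tendsto (fun n : ℕ => Real.log (2 * ((n:ℝ) + 1)) / n) atTop (nhds 0) := by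
  have h0 : Tendsto (fun x : ℝ => Real.log x / x) atTop (nhds 0) :=
    Real.isLittleO_log_id_atTop.tendsto_div_nhds_zero
  have htop : Tendsto (fun n : ℕ => 2 * ((n:ℝ) + 1)) atTop atTop := by
    apply Filter.Tendsto.const_mul_atTop (by norm_num : (0:ℝ) < 2)
    exact tendsto_atTop_add_const_right _ _ tendsto_natCast_atTop_atTop
  have h1 : Tendsto (fun n : ℕ => Real.log (2 * ((n:ℝ) + 1)) / (2 * ((n:ℝ) + 1)))
      atTop (nhds 0) := h0.comp htop
  have h2 : Tendsto (fun n : ℕ => 2 * ((n:ℝ) + 1) / n) atTop (nhds 2) := by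
    have : Tendsto (fun n : ℕ => 2 + 2 / (n:ℝ)) atTop (nhds (2 + 0)) :=
      tendsto_const_nhds.add (tendsto_const_div_atTop_nhds_zero_nat 2)
    rw [add_zero] at this
    apply this.congr'
    filter_upwards [eventually_ge_atTop 1] with n hn
    have hn' : (n:ℝ) ≠ 0 := by positivity
    field_simp
  have := h1.mul h2
  rw [zero_mul] at this
  apply this.congr'
  filter_upwards [eventually_ge_atTop 1] with n hn
  have hn' : (n:ℝ) ≠ 0 := by
    have : (1:ℝ) ≤ n := by exact_mod_cast hn
    linarith
  have h3 : (2 * ((n:ℝ) + 1)) ≠ 0 := by positivity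
  field_simp

lemma tendsto_Dd_div {a : ℕ → ℕ} (ha : ∀ n, a n ≤ n) :
    Tendsto (fun n : ℕ => Dd (a n) / n) atTop (nhds 0) := by
  obtain ⟨C, hC0, hC⟩ := Dd_bound
  have h1 : Tendsto (fun n : ℕ => C / n + Real.log (2 * ((n:ℝ) + 1)) / n) atTop
      (nhds (0 + 0)) :=
    (tendsto_const_div_atTop_nhds_zero_nat C).add tendsto_log_aux
  rw [add_zero] at h1
  apply squeeze_zero_norm _ h1
  intro n
  rcases Nat.eq_zero_or_pos n with hn | hn
  · subst hn
    have h0 : a 0 = 0 := Nat.le_zero.mp (ha 0)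
    simp [h0, Dd]
  · have hn' : (0:ℝ) < n := by exact_mod_cast hn
    rw [Real.norm_eq_abs, abs_div, abs_of_pos hn', ← add_div]
    have hmono : |Dd (a n)| ≤ C + Real.log (2 * ((n:ℝ) + 1)) := by
      refine (hC (a n)).trans ?_
      have : Real.log (2 * ((a n : ℝ) + 1)) ≤ Real.log (2 * ((n:ℝ) + 1)) := by
        apply Real.log_le_log (by positivity)
        have : (a n : ℝ) ≤ n := by exact_mod_cast ha n
        linarith
      push_cast
      linarith
    gcongr


lemma log_div_eq (t q : ℝ) (hq : q ≠ 0) :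
    t * Real.log (t / q) = t * Real.log t - t * Real.log q := by
  rcases eq_or_ne t 0 with h | h
  · simp [h]
  · rw [Real.log_div h hq]; ring

theorem main_aux (p₀ p₁ : ℝ) (hp₀ : 0 < p₀) (hp₁ : 0 < p₁) (hp : p₀ + p₁ < 1)
    (x y : ℝ) (a b : ℕ → ℕ) (hab : ∀ n, a n + b n ≤ n)
    (hA : Tendsto (fun n : ℕ => (a n : ℝ) / n) atTop (nhds x))
    (hB : Tendsto (fun n : ℕ => (b n : ℝ) / n) atTop (nhds y)) :
    Tendsto (fun n : ℕ =>
      (n : ℝ)⁻¹ * Real.log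
        ((n.choose (a n) : ℝ) * ((n - a n).choose (b n) : ℝ)
          * p₀ ^ (a n) * p₁ ^ (b n) * (1 - p₀ - p₁) ^ (n - a n - b n)))
      atTop
      (nhds (-(x * Real.log (x / p₀) + y * Real.log (y / p₁)
        + (1 - x - y) * Real.log ((1 - x - y) / (1 - p₀ - p₁))))) := by
  have hp₂ : 0 < 1 - p₀ - p₁ := by linarith
  set c : ℕ → ℕ := fun n => n - a n - b n with hc_def
  have hcastc : ∀ n, (c n : ℝ) = (n : ℝ) - a n - b n := by
    intro n
    have h := hab n
    have h2 : c n = n - (a n + b n) := by simp only [hc_def]; omega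
    rw [h2, Nat.cast_sub h]
    push_cast; ring
  have hC : Tendsto (fun n : ℕ => (c n : ℝ) / n) atTop (nhds (1 - x - y)) := by
    have h := ((tendsto_const_nhds : Tendsto (fun _ : ℕ => (1:ℝ)) atTop (nhds 1)).sub hA).sub hB
    apply h.congr'
    filter_upwards [eventually_ge_atTop 1] with n hn
    have hn0 : (n : ℝ) ≠ 0 := Nat.cast_ne_zero.mpr (by omega)
    rw [hcastc n]
    field_simp
  have hmulog : ∀ {u : ℕ → ℝ} {t : ℝ}, Tendsto u atTop (nhds t) →
      Tendsto (fun n => u n * Real.log (u n)) atTop (nhds (t * Real.log t)) := by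
    intro u t h
    exact (Real.continuous_mul_log.tendsto t).comp h
  have hDn : Tendsto (fun n : ℕ => Dd n / n) atTop (nhds 0) :=
    tendsto_Dd_div (a := fun n => n) (fun n => le_refl n)
  have hDa : Tendsto (fun n : ℕ => Dd (a n) / n) atTop (nhds 0) :=
    tendsto_Dd_div (fun n => le_trans (Nat.le_add_right _ _) (hab n))
  have hDb : Tendsto (fun n : ℕ => Dd (b n) / n) atTop (nhds 0) :=
    tendsto_Dd_div (fun n => le_trans (Nat.le_add_left _ _) (hab n))
  have hDc : Tendsto (fun n : ℕ => Dd (c n) / n) atTop (nhds 0) :=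
    tendsto_Dd_div (fun n => by simp only [hc_def]; omega)
  have hFlim : Tendsto (fun n : ℕ =>
      -((a n : ℝ)/n * Real.log ((a n : ℝ)/n) + (b n : ℝ)/n * Real.log ((b n : ℝ)/n)
        + (c n : ℝ)/n * Real.log ((c n : ℝ)/n))
      + ((a n : ℝ)/n * Real.log p₀ + (b n : ℝ)/n * Real.log p₁
        + (c n : ℝ)/n * Real.log (1 - p₀ - p₁))
      + (Dd n / n - Dd (a n) / n - Dd (b n) / n - Dd (c n) / n)) atTop
      (nhds (-(x * Real.log x + y * Real.log y + (1 - x - y) * Real.log (1 - x - y))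
        + (x * Real.log p₀ + y * Real.log p₁ + (1 - x - y) * Real.log (1 - p₀ - p₁))
        + (0 - 0 - 0 - 0))) := by
    exact ((((hmulog hA).add (hmulog hB)).add (hmulog hC)).neg.add
      (((hA.mul_const _).add (hB.mul_const _)).add (hC.mul_const _))).add
      (((hDn.sub hDa).sub hDb).sub hDc)
  have hval : -(x * Real.log (x / p₀) + y * Real.log (y / p₁)
        + (1 - x - y) * Real.log ((1 - x - y) / (1 - p₀ - p₁)))
      = -(x * Real.log x + y * Real.log y + (1 - x - y) * Real.log (1 - x - y))
        + (x * Real.log p₀ + y * Real.log p₁ + (1 - x - y) * Real.log (1 - p₀ - p₁))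
        + ((0:ℝ) - 0 - 0 - 0) := by
    rw [log_div_eq x p₀ hp₀.ne', log_div_eq y p₁ hp₁.ne', log_div_eq _ _ hp₂.ne']
    ring
  rw [hval]
  apply hFlim.congr'
  filter_upwards [eventually_ge_atTop 1] with n hn
  have hn0 : (n : ℝ) ≠ 0 := Nat.cast_ne_zero.mpr (by omega)
  have habn := hab n
  have hAn : a n ≤ n := le_trans (Nat.le_add_right _ _) habn
  have hBn : b n ≤ n - a n := by omega
  have hfn : (Nat.factorial n : ℝ) ≠ 0 := Nat.cast_ne_zero.mpr (Nat.factorial_pos n).ne'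
  have hfA : (Nat.factorial (a n) : ℝ) ≠ 0 := Nat.cast_ne_zero.mpr (Nat.factorial_pos _).ne'
  have hfB : (Nat.factorial (b n) : ℝ) ≠ 0 := Nat.cast_ne_zero.mpr (Nat.factorial_pos _).ne'
  have hfC : (Nat.factorial (c n) : ℝ) ≠ 0 := Nat.cast_ne_zero.mpr (Nat.factorial_pos _).ne'
  have hfNA : (Nat.factorial (n - a n) : ℝ) ≠ 0 := Nat.cast_ne_zero.mpr (Nat.factorial_pos _).ne'
  have hZ1 : p₀ ^ a n ≠ 0 := pow_ne_zero _ hp₀.ne'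
  have hZ2 : p₁ ^ b n ≠ 0 := pow_ne_zero _ hp₁.ne'
  have hZ3 : (1 - p₀ - p₁) ^ c n ≠ 0 := pow_ne_zero _ hp₂.ne'
  have hY : ((Nat.factorial (a n) : ℝ) * (Nat.factorial (b n) : ℝ) * (Nat.factorial (c n) : ℝ)) ≠ 0 :=
    mul_ne_zero (mul_ne_zero hfA hfB) hfC
  have hZ : (p₀ ^ a n * p₁ ^ b n * (1 - p₀ - p₁) ^ c n) ≠ 0 :=
    mul_ne_zero (mul_ne_zero hZ1 hZ2) hZ3
  have hcc : n - a n - b n = c n := rfl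
  have e0 : ((n.choose (a n) : ℝ) * ((n - a n).choose (b n) : ℝ)
        * p₀ ^ a n * p₁ ^ b n * (1 - p₀ - p₁) ^ (n - a n - b n))
      = (Nat.factorial n : ℝ) / ((Nat.factorial (a n) : ℝ) * (Nat.factorial (b n) : ℝ) * (Nat.factorial (c n) : ℝ))
        * (p₀ ^ a n * p₁ ^ b n * (1 - p₀ - p₁) ^ c n) := by
    rw [Nat.cast_choose ℝ hAn, Nat.cast_choose ℝ hBn, hcc]
    field_simp
  have hlogP : Real.log ((n.choose (a n) : ℝ) * ((n - a n).choose (b n) : ℝ)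
        * p₀ ^ a n * p₁ ^ b n * (1 - p₀ - p₁) ^ (n - a n - b n))
      = (n : ℝ) * Real.log n - n + Dd n
        - ((a n : ℝ) * Real.log (a n) - a n + Dd (a n))
        - ((b n : ℝ) * Real.log (b n) - b n + Dd (b n))
        - ((c n : ℝ) * Real.log (c n) - c n + Dd (c n))
        + (a n : ℝ) * Real.log p₀ + (b n : ℝ) * Real.log p₁
        + (c n : ℝ) * Real.log (1 - p₀ - p₁) := by
    rw [e0, Real.log_mul (div_ne_zero hfn hY) hZ, Real.log_div hfn hY,
      Real.log_mul (mul_ne_zero hfA hfB) hfC, Real.log_mul hfA hfB,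
      Real.log_mul (mul_ne_zero hZ1 hZ2) hZ3, Real.log_mul hZ1 hZ2,
      Real.log_pow, Real.log_pow, Real.log_pow,
      log_factorial_eq n, log_factorial_eq (a n), log_factorial_eq (b n),
      log_factorial_eq (c n)]
    ring
  have key : ∀ t : ℕ, (t : ℝ) * Real.log t
      = (t : ℝ) * Real.log n + (t : ℝ) * Real.log ((t : ℝ) / n) := by
    intro t
    rcases eq_or_ne t 0 with h | h
    · simp [h]
    · rw [Real.log_div (Nat.cast_ne_zero.mpr h) hn0]; ring
  have hsum : (a n : ℝ) + b n + c n = n := by rw [hcastc n]; ring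
  rw [hlogP, key (a n), key (b n), key (c n)]
  linear_combination ((n : ℝ)⁻¹ * (Real.log n - 1)) * hsum

theorem stmt9 (p₀ p₁ : ℝ) (hp₀ : 0 < p₀) (hp₁ : 0 < p₁) (hp : p₀ + p₁ < 1)
    (x y : ℝ) (hx : 0 ≤ x) (hy : 0 ≤ y) (hxy : x + y ≤ 1) :
    Filter.Tendsto (fun n : ℕ =>
      (n : ℝ)⁻¹ * Real.log
        ((n.choose ⌊(n : ℝ) * x⌋₊ : ℝ)
          * ((n - ⌊(n : ℝ) * x⌋₊).choose ⌊(n : ℝ) * y⌋₊ : ℝ)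
          * p₀ ^ ⌊(n : ℝ) * x⌋₊ * p₁ ^ ⌊(n : ℝ) * y⌋₊
          * (1 - p₀ - p₁) ^ (n - ⌊(n : ℝ) * x⌋₊ - ⌊(n : ℝ) * y⌋₊)))
      Filter.atTop
      (nhds (-(x * Real.log (x / p₀) + y * Real.log (y / p₁)
        + (1 - x - y) * Real.log ((1 - x - y) / (1 - p₀ - p₁))))) := by
  have hab : ∀ n : ℕ, ⌊(n : ℝ) * x⌋₊ + ⌊(n : ℝ) * y⌋₊ ≤ n := by
    intro n
    have h1 : (⌊(n : ℝ) * x⌋₊ : ℝ) ≤ (n : ℝ) * x := Nat.floor_le (by positivity)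
    have h2 : (⌊(n : ℝ) * y⌋₊ : ℝ) ≤ (n : ℝ) * y := Nat.floor_le (by positivity)
    have h3 : ((⌊(n : ℝ) * x⌋₊ + ⌊(n : ℝ) * y⌋₊ : ℕ) : ℝ) ≤ (n : ℝ) := by
      push_cast
      nlinarith [Nat.cast_nonneg (α := ℝ) n]
    exact_mod_cast h3
  have hA : Filter.Tendsto (fun n : ℕ => ((⌊(n : ℝ) * x⌋₊ : ℕ) : ℝ) / n)
      Filter.atTop (nhds x) := by
    have h := (tendsto_nat_floor_mul_div_atTop hx).comp
      (tendsto_natCast_atTop_atTop (R := ℝ))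
    have he : (fun n : ℕ => ((⌊(n : ℝ) * x⌋₊ : ℕ) : ℝ) / n)
        = (fun n : ℕ => ((⌊x * (n : ℝ)⌋₊ : ℕ) : ℝ) / n) := by
      funext n; rw [mul_comm]
    rw [he]; exact h
  have hB : Filter.Tendsto (fun n : ℕ => ((⌊(n : ℝ) * y⌋₊ : ℕ) : ℝ) / n)
      Filter.atTop (nhds y) := by
    have h := (tendsto_nat_floor_mul_div_atTop hy).comp
      (tendsto_natCast_atTop_atTop (R := ℝ))
    have he : (fun n : ℕ => ((⌊(n : ℝ) * y⌋₊ : ℕ) : ℝ) / n)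
        = (fun n : ℕ => ((⌊y * (n : ℝ)⌋₊ : ℕ) : ℝ) / n) := by
      funext n; rw [mul_comm]
    rw [he]; exact h
  exact main_aux p₀ p₁ hp₀ hp₁ hp x y _ _ hab hA hB
end

section
/- Let μ₁, μ₂ > 0, l₁ = (0,−1)ᵀ, l₂ = (−1,1)ᵀ, and v ∈ ℝ². If sup over θ ∈ ℝ² of [θ·v − (e^{θ·l₁} − 1)μ₁ − (e^{θ·l₂} − 1)μ₂] is finite, then there exist h₁, h₂ ≥ 0 such that v = h₁μ₁l₁ + h₂μ₂l₂, i.e., the first coordinate of v is ≤ 0 and the sum of the two coordinates of v is ≤ 0. -/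
lemma aux14 (c M : ℝ) (h : ∀ t : ℝ, 0 ≤ t → t * c ≤ M) : c ≤ 0 := by
  by_contra hc
  push_neg at hc
  have ht := h ((|M| + 1) / c) (by positivity)
  rw [div_mul_cancel₀ _ hc.ne'] at ht
  have := le_abs_self M
  linarith

theorem stmt14 (μ₁ μ₂ : ℝ) (hμ₁ : 0 < μ₁) (hμ₂ : 0 < μ₂) (v : ℝ × ℝ)
    (hbdd : BddAbove (Set.range fun θ : ℝ × ℝ =>
      θ.1 * v.1 + θ.2 * v.2 - (Real.exp (-θ.2) - 1) * μ₁
        - (Real.exp (θ.2 - θ.1) - 1) * μ₂)) :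
    ∃ h₁ h₂ : ℝ, 0 ≤ h₁ ∧ 0 ≤ h₂ ∧
      v = (-(h₂ * μ₂), -(h₁ * μ₁) + h₂ * μ₂) ∧ v.1 ≤ 0 ∧ v.1 + v.2 ≤ 0 := by
  obtain ⟨M, hM⟩ := hbdd
  have h1 : v.1 ≤ 0 := by
    apply aux14 v.1 M
    intro t ht
    have h := hM (Set.mem_range_self ((t, 0) : ℝ × ℝ))
    simp only [Real.exp_zero, neg_zero, zero_sub] at h
    have he : Real.exp (-t) ≤ 1 := Real.exp_le_one_iff.mpr (by linarith)
    nlinarith [hμ₂.le]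
  have h2 : v.1 + v.2 ≤ 0 := by
    apply aux14 (v.1 + v.2) M
    intro t ht
    have h := hM (Set.mem_range_self ((t, t) : ℝ × ℝ))
    simp only [sub_self, Real.exp_zero] at h
    have he : Real.exp (-t) ≤ 1 := Real.exp_le_one_iff.mpr (by linarith)
    nlinarith [hμ₁.le]
  refine ⟨-(v.1 + v.2) / μ₁, -v.1 / μ₂, div_nonneg (by linarith) hμ₁.le, div_nonneg (by linarith) hμ₂.le, ?_, h1, h2⟩
  have : -(-v.1 / μ₂ * μ₂) = v.1 := by field_simp
  have : -(-(v.1 + v.2) / μ₁ * μ₁) + -v.1 / μ₂ * μ₂ = v.2 := by field_simp; ring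
  ext <;> simp_all
end
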